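/- Let a : ℝ → ℝ be a C^∞ function with a(s) = 0 for all s ≤ 0. Define A : ℝ³ → ℝ by A(x,y,z) = a(x²+y²−z²)/(x²+y²) if x²+y² ≠ 0 and A(x,y,z) = 0 if x²+y² = 0. Then A is C^∞ on all of ℝ³. Consequently the functions f(x,y,z) = x·A(x,y,z) and g(x,y,z) = −y·A(x,y,z) are C^∞ on ℝ³. -/

import Mathlib

noncomputable section

open Filter Topology Set Asymptotics

def IsFlat (a : ℝ → ℝ) : Prop := ContDiff ℝ (⊤ : ℕ∞) a ∧ ∀ s : ℝ, s ≤ 0 → a s = 0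

lemma isFlat_def {a : ℝ → ℝ} :
    IsFlat a ↔ ContDiff ℝ (⊤ : ℕ∞) a ∧ ∀ s : ℝ, s ≤ 0 → a s = 0 := Iff.rfl

lemma isFlat_deriv {a : ℝ → ℝ} (h : IsFlat a) : IsFlat (deriv a) := by
  obtain ⟨ha, h0⟩ := h
  have hd : ContDiff ℝ (⊤ : ℕ∞) (deriv a) := (contDiff_infty_iff_deriv.mp ha).2
  have hneg : ∀ s < (0:ℝ), deriv a s = 0 := by
    intro s hs
    have he : a =ᶠ[𝓝 s] fun _ => 0 := by
      filter_upwards [Iio_mem_nhds hs] with t ht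
      exact h0 t (le_of_lt ht)
    rw [he.deriv_eq]
    simp
  refine ⟨hd, fun s hs => ?_⟩
  rcases lt_or_eq_of_le hs with h' | h'
  · exact hneg s h'
  · subst h'
    have hc : Tendsto (deriv a) (𝓝[<] (0:ℝ)) (𝓝 (deriv a 0)) :=
      (hd.continuous.continuousAt).continuousWithinAt
    have hz : Tendsto (deriv a) (𝓝[<] (0:ℝ)) (𝓝 0) := by
      refine Tendsto.congr' ?_ tendsto_const_nhds
      filter_upwards [self_mem_nhdsWithin] with t ht
      exact (hneg t ht).symm
    exact tendsto_nhds_unique hc hz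

lemma isFlat_tendsto_div_pow {k : ℕ} : ∀ {a : ℝ → ℝ}, IsFlat a →
    Tendsto (fun s => a s / s ^ k) (𝓝 0) (𝓝 0) := by
  induction k with
  | zero =>
    intro a h
    simpa [h.2 0 le_rfl] using (h.1.continuous.tendsto 0)
  | succ k ih =>
    intro a h
    have hleft : Tendsto (fun s => a s / s ^ (k+1)) (𝓝[≤] (0:ℝ)) (𝓝 0) := by
      refine Tendsto.congr' ?_ tendsto_const_nhds
      filter_upwards [self_mem_nhdsWithin] with t ht
      simp [h.2 t ht]
    have hright : Tendsto (fun s => a s / s ^ (k+1)) (𝓝[>] (0:ℝ)) (𝓝 0) := by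
      have hdiv : Tendsto (fun s => deriv a s / ((k+1) * s ^ k)) (𝓝[>] (0:ℝ)) (𝓝 0) := by
        have h1 : Tendsto (fun s => deriv a s / s ^ k / (k+1)) (𝓝[>] (0:ℝ)) (𝓝 0) := by
          simpa using ((ih (isFlat_deriv h)).mono_left nhdsWithin_le_nhds).div_const ((k:ℝ)+1)
        refine h1.congr fun s => ?_
        rw [div_div, mul_comm]
      refine HasDerivAt.lhopital_zero_nhdsGT ?_ ?_ ?_ ?_ ?_ hdiv
      · filter_upwards with s
        exact ((h.1.differentiable (by simp)) s).hasDerivAt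
      · filter_upwards with s
        simpa using hasDerivAt_pow (k+1) s
      · filter_upwards [self_mem_nhdsWithin] with s hs
        have : (0:ℝ) < s := hs
        positivity
      · have := (h.1.continuous.tendsto 0).mono_left (nhdsWithin_le_nhds (s := Ioi (0:ℝ)))
        simpa [h.2 0 le_rfl] using this
      · have : Tendsto (fun s : ℝ => s ^ (k+1)) (𝓝 0) (𝓝 0) := by
          simpa using (continuous_pow (k+1)).tendsto (0:ℝ)
        exact this.mono_left nhdsWithin_le_nhds
    have := hleft.sup hright
    rwa [nhdsLE_sup_nhdsGT] at this

lemma isFlat_continuous_div_pow {a : ℝ → ℝ} (h : IsFlat a) (k : ℕ) :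
    Continuous fun s => a s / s ^ (k+1) := by
  obtain ⟨h1, h2⟩ := isFlat_def.mp h
  rw [continuous_iff_continuousAt]
  intro x
  rcases ne_or_eq x 0 with hx | rfl
  · exact (h1.continuous.continuousAt).div (continuousAt_pow _ _) (pow_ne_zero _ hx)
  · have h0 : a 0 / (0:ℝ) ^ (k+1) = 0 := by simp
    rw [ContinuousAt, h0]
    exact isFlat_tendsto_div_pow h

lemma isFlat_hasDerivAt_div_pow {a : ℝ → ℝ} (h : IsFlat a) (k : ℕ) (s : ℝ) :
    HasDerivAt (fun s => a s / s ^ (k+1))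
      ((s * deriv a s - (k+1) * a s) / s ^ (k+2)) s := by
  obtain ⟨h1, h2⟩ := isFlat_def.mp h
  have he : IsFlat (fun s => s * deriv a s - (k+1) * a s) := by
    rw [isFlat_def]
    constructor
    · exact (contDiff_id.mul (contDiff_infty_iff_deriv.mp h1).2).sub (contDiff_const.mul h1)
    · intro s hs
      rw [(isFlat_def.mp (isFlat_deriv h)).2 s hs, h2 s hs]
      ring
  have key : ∀ y : ℝ, y ≠ 0 → HasDerivAt (fun s => a s / s ^ (k+1))
      ((y * deriv a y - (k+1) * a y) / y ^ (k+2)) y := by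
    intro y hy
    have hd := ((h1.differentiable (by simp)) y).hasDerivAt
    have := hd.div (hasDerivAt_pow (k+1) y) (pow_ne_zero _ hy)
    refine this.congr_deriv ?_
    have h3 : (k + 1 - 1 : ℕ) = k := by omega
    rw [h3]
    push_cast
    field_simp
    ring
  rcases ne_or_eq s 0 with hs | rfl
  · exact key s hs
  · exact hasDerivAt_of_hasDerivAt_of_ne key
      (isFlat_continuous_div_pow h k).continuousAt
      (isFlat_continuous_div_pow he (k+1)).continuousAt

lemma isFlat_contDiff_div_pow {n : ℕ} : ∀ {a : ℝ → ℝ}, IsFlat a → ∀ k : ℕ,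
    ContDiff ℝ n (fun s => a s / s ^ (k+1)) := by
  induction n with
  | zero =>
    intro a h k
    rw [show ((0:ℕ) : WithTop ℕ∞) = 0 from rfl, contDiff_zero]
    exact isFlat_continuous_div_pow h k
  | succ n ih =>
    intro a h k
    obtain ⟨h1, h2⟩ := isFlat_def.mp h
    have he : IsFlat (fun s => s * deriv a s - (k+1) * a s) := by
      rw [isFlat_def]
      constructor
      · exact (contDiff_id.mul (contDiff_infty_iff_deriv.mp h1).2).sub (contDiff_const.mul h1)
      · intro s hs
        rw [(isFlat_def.mp (isFlat_deriv h)).2 s hs, h2 s hs]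
        ring
    rw [show ((n+1 : ℕ) : WithTop ℕ∞) = (n : WithTop ℕ∞) + 1 from by push_cast; rfl, contDiff_succ_iff_deriv]
    refine ⟨fun s => (isFlat_hasDerivAt_div_pow h k s).differentiableAt, ?_, ?_⟩
    · intro hh
      exact absurd hh (by exact_mod_cast (WithTop.coe_ne_top))
    · have hde : deriv (fun s => a s / s ^ (k+1)) =
          fun s => ((fun t => t * deriv a t - (k+1) * a t) s) / s ^ ((k+1)+1) := by
        funext s
        exact (isFlat_hasDerivAt_div_pow h k s).deriv
      rw [hde]
      exact ih he (k+1)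

lemma isFlat_div_id {a : ℝ → ℝ} (h : IsFlat a) : IsFlat (fun s => a s / s) := by
  rw [isFlat_def]
  constructor
  · rw [contDiff_infty]
    intro n
    have := isFlat_contDiff_div_pow (n := n) h 0
    simpa using this
  · intro s hs
    rw [(isFlat_def.mp h).2 s hs]
    simp

lemma isFlat_factor {a : ℝ → ℝ} (h : IsFlat a) (m : ℕ) :
    ∃ b : ℝ → ℝ, IsFlat b ∧ ∀ s, a s = s ^ m * b s := by
  induction m with
  | zero => exact ⟨a, h, fun s => by simp⟩
  | succ m ih =>
    obtain ⟨b, hb, hab⟩ := ih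
    refine ⟨fun s => b s / s, isFlat_div_id hb, fun s => ?_⟩
    rcases ne_or_eq s 0 with hs | rfl
    · rw [hab s]
      field_simp
      ring
    · rw [(isFlat_def.mp h).2 0 le_rfl]
      simp

def G2 (k : ℕ) (a : ℝ → ℝ) : ℝ × ℝ → ℝ := fun p => a (p.1 - p.2 ^ 2) / p.1 ^ k


/-- key pointwise bound: with `a = t^(k+1+m) b`, `|G2 (k+1) a q| ≤ |b t| * |q.1|^(m+1)`. -/
lemma G2_bound {a b : ℝ → ℝ} (hb : IsFlat b) (k m : ℕ)
    (hab : ∀ s, a s = s ^ (k+1+m+1) * b s) (ha : IsFlat a) (q : ℝ × ℝ) :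
    |G2 (k+1) a q| ≤ |b (q.1 - q.2 ^ 2)| * |q.1| ^ (m+1) := by
  set t := q.1 - q.2 ^ 2 with ht
  rcases le_or_gt t 0 with h | h
  · have : a t = 0 := (isFlat_def.mp ha).2 t h
    simp only [G2, ← ht, this, zero_div, abs_zero]
    positivity
  · have hu : t ≤ q.1 := by nlinarith [sq_nonneg q.2]
    have hq1 : 0 < q.1 := lt_of_lt_of_le h hu
    have : G2 (k+1) a q = t ^ (k+1+m+1) * b t / q.1 ^ (k+1) := by
      simp only [G2, ← ht, hab t]
    rw [this, abs_div, abs_mul, abs_pow, abs_pow]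
    rw [div_le_iff₀ (by positivity)]
    have h1 : |t| = t := abs_of_pos h
    have h2 : |q.1| = q.1 := abs_of_pos hq1
    rw [h1, h2]
    have hpow : t ^ (k+1+m+1) ≤ q.1 ^ (k+1) * q.1 ^ (m+1) := by
      rw [← pow_add]
      exact pow_le_pow_left₀ (le_of_lt h) hu _
    calc t ^ (k+1+m+1) * |b t| ≤ (q.1 ^ (k+1) * q.1 ^ (m+1)) * |b t| := by
          exact mul_le_mul_of_nonneg_right hpow (abs_nonneg _)
      _ = |b t| * q.1 ^ (m+1) * q.1 ^ (k+1) := by ring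

lemma isFlat_continuous_G2 {a : ℝ → ℝ} (h : IsFlat a) (k : ℕ) :
    Continuous (G2 (k+1) a) := by
  obtain ⟨h1, h2⟩ := isFlat_def.mp h
  rw [continuous_iff_continuousAt]
  intro p
  rcases ne_or_eq p.1 0 with hu | hu
  · refine ContinuousAt.div ?_ ?_ (pow_ne_zero _ hu)
    · exact (h1.continuous.comp (continuous_fst.sub (continuous_snd.pow 2))).continuousAt
    · exact (continuous_fst.pow _).continuousAt
  · -- p.1 = 0 : squeeze
    obtain ⟨b, hb, hab⟩ := isFlat_factor h (k+1+0+1)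
    have hbc : Continuous b := (isFlat_def.mp hb).1.continuous
    have hGp : G2 (k+1) a p = 0 := by
      simp only [G2, hu, zero_pow (Nat.succ_ne_zero k), div_zero]
    rw [ContinuousAt, hGp, tendsto_zero_iff_abs_tendsto_zero]
    have hbound := fun q => G2_bound hb k 0 hab h q
    refine squeeze_zero (fun q => abs_nonneg _) hbound ?_
    have : Continuous fun q : ℝ × ℝ => |b (q.1 - q.2 ^ 2)| * |q.1| ^ (0+1) :=
      ((hbc.comp (continuous_fst.sub (continuous_snd.pow 2))).abs.mul
        ((continuous_fst.abs).pow _))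
    have h3 := this.tendsto p
    rw [hu] at h3
    simpa using h3

def D2 (k : ℕ) (a : ℝ → ℝ) (p : ℝ × ℝ) : ℝ × ℝ →L[ℝ] ℝ :=
  (G2 (k+1) (deriv a) p - (k+1) * G2 (k+2) a p) • (ContinuousLinearMap.fst ℝ ℝ ℝ)
    + (-(2 * p.2) * G2 (k+1) (deriv a) p) • (ContinuousLinearMap.snd ℝ ℝ ℝ)

lemma isFlat_hasFDerivAt_G2 {a : ℝ → ℝ} (h : IsFlat a) (k : ℕ) (p : ℝ × ℝ) :
    HasFDerivAt (G2 (k+1) a) (D2 k a p) p := by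
  obtain ⟨h1, h2⟩ := isFlat_def.mp h
  rcases ne_or_eq p.1 0 with hu | hu
  · -- regular point
    set t := p.1 - p.2 ^ 2 with htdef
    have hinner : HasFDerivAt (fun q : ℝ × ℝ => q.1 - q.2 ^ 2)
        ((ContinuousLinearMap.fst ℝ ℝ ℝ)
          - (2 * p.2 ^ 1) • (ContinuousLinearMap.snd ℝ ℝ ℝ)) p := by
      have hA := hasFDerivAt_fst (𝕜 := ℝ) (E := ℝ) (F := ℝ) (p := p)
      have hB := (hasDerivAt_pow 2 p.2).comp_hasFDerivAt p
        (hasFDerivAt_snd (𝕜 := ℝ) (E := ℝ) (F := ℝ) (p := p))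
      simpa [Pi.sub_def, Function.comp_def] using hA.sub hB
    have hnum : HasFDerivAt (fun q : ℝ × ℝ => a (q.1 - q.2 ^ 2))
        (deriv a t • ((ContinuousLinearMap.fst ℝ ℝ ℝ)
          - (2 * p.2 ^ 1) • (ContinuousLinearMap.snd ℝ ℝ ℝ))) p := by
      have hda : HasDerivAt a (deriv a t) t :=
        ((h1.differentiable (by simp)) t).hasDerivAt
      exact hda.comp_hasFDerivAt p hinner
    have hden : HasFDerivAt (fun q : ℝ × ℝ => q.1 ^ (k+1))
        (((k+1 : ℕ) * p.1 ^ k) • (ContinuousLinearMap.fst ℝ ℝ ℝ)) p := by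
      have := (hasDerivAt_pow (k+1) p.1).comp_hasFDerivAt p
        (hasFDerivAt_fst (𝕜 := ℝ) (E := ℝ) (F := ℝ) (p := p))
      simpa [Function.comp_def] using this
    have hi := hasDerivAt_inv (pow_ne_zero (k+1) hu)
    have hinv := hi.comp_hasFDerivAt p hden
    have hmul := hnum.mul hinv
    have hfun : G2 (k+1) a = fun q : ℝ × ℝ => a (q.1 - q.2 ^ 2) * (q.1 ^ (k+1))⁻¹ := by
      funext q
      simp [G2, div_eq_mul_inv]
    rw [hfun]
    refine hmul.congr_fderiv ?_
    simp only [D2, G2, ← htdef, Function.comp_apply]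
    match_scalars
    · field_simp
      ring
    · field_simp
  · -- singular point : D2 k a p = 0
    have hz : ∀ c : ℝ → ℝ, ∀ m : ℕ, G2 (m+1) c p = 0 := by
      intro c m
      simp only [G2, hu, zero_pow (Nat.succ_ne_zero m), div_zero]
    have hD : D2 k a p = 0 := by
      have e1 := hz (deriv a) k
      have e2 := hz a (k+1)
      simp only [D2, e1, e2]
      simp
    rw [hD]
    rcases ne_or_eq p.2 0 with hv | hv
    · -- G2 vanishes in a neighborhood
      have hev : G2 (k+1) a =ᶠ[𝓝 p] fun _ => 0 := by
        have hcont : Continuous fun q : ℝ × ℝ => q.1 - q.2 ^ 2 :=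
          continuous_fst.sub (continuous_snd.pow 2)
        have hpt : p.1 - p.2 ^ 2 < 0 := by
          have h4 : 0 < p.2 ^ 2 := lt_of_le_of_ne (sq_nonneg _) (Ne.symm (pow_ne_zero 2 hv))
          rw [hu]
          linarith
        have : ∀ᶠ q : ℝ × ℝ in 𝓝 p, q.1 - q.2 ^ 2 < 0 :=
          (hcont.continuousAt (x := p)).eventually_lt_const hpt
        filter_upwards [this] with q hq
        simp only [G2, h2 _ (le_of_lt hq), zero_div]
      have : HasFDerivAt (fun _ : ℝ × ℝ => (0:ℝ)) 0 p := hasFDerivAt_const (𝕜 := ℝ) (0:ℝ) p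
      exact this.congr_of_eventuallyEq hev
    · -- p = 0
      have hp0 : p = 0 := Prod.ext hu hv
      subst hp0
      rw [hasFDerivAt_iff_isLittleO_nhds_zero]
      have hG0 : G2 (k+1) a 0 = 0 := by
        simp [G2, zero_pow (Nat.succ_ne_zero k)]
      simp only [ContinuousLinearMap.zero_apply, hG0, sub_zero, zero_add]
      obtain ⟨b, hb, hab⟩ := isFlat_factor h (k+1+1+1)
      have hbc : Continuous b := (isFlat_def.mp hb).1.continuous
      have hbig : (fun q : ℝ × ℝ => G2 (k+1) a q) =O[𝓝 0] fun q : ℝ × ℝ => ‖q‖ ^ 2 := by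
        rw [isBigO_iff]
        refine ⟨|b 0| + 1, ?_⟩
        have hev : ∀ᶠ q : ℝ × ℝ in 𝓝 0, |b (q.1 - q.2 ^ 2)| < |b 0| + 1 := by
          have hc : Continuous fun q : ℝ × ℝ => |b (q.1 - q.2 ^ 2)| :=
            (hbc.comp (continuous_fst.sub (continuous_snd.pow 2))).abs
          have := (hc.continuousAt (x := (0 : ℝ × ℝ))).eventually_lt_const
            (by simp : |b ((0:ℝ×ℝ).1 - (0:ℝ×ℝ).2 ^ 2)| < |b 0| + 1)
          exact this
        filter_upwards [hev] with q hq
        have hbd := G2_bound hb k 1 hab h q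
        have h3 : |q.1| ≤ ‖q‖ := by
          have := norm_fst_le q
          simpa using this
        calc ‖G2 (k+1) a q‖ ≤ |b (q.1 - q.2 ^ 2)| * |q.1| ^ (1+1) := hbd
          _ ≤ (|b 0| + 1) * ‖q‖ ^ 2 := by
              have hb0 : (0:ℝ) ≤ |b 0| + 1 := by positivity
              have := pow_le_pow_left₀ (abs_nonneg q.1) h3 2
              calc |b (q.1 - q.2 ^ 2)| * |q.1| ^ (1+1)
                  ≤ (|b 0| + 1) * |q.1| ^ 2 := by
                    exact mul_le_mul_of_nonneg_right (le_of_lt hq) (by positivity)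
                _ ≤ (|b 0| + 1) * ‖q‖ ^ 2 := by
                    exact mul_le_mul_of_nonneg_left this hb0
          _ = (|b 0| + 1) * ‖(fun q : ℝ × ℝ => ‖q‖ ^ 2) q‖ := by
              have hnn : (0:ℝ) ≤ ‖q‖ ^ 2 := pow_nonneg (norm_nonneg q) 2
              rw [Real.norm_eq_abs, abs_of_nonneg hnn]
      exact hbig.trans_isLittleO (isLittleO_norm_pow_id (by norm_num))

lemma isFlat_contDiff_G2 {n : ℕ} : ∀ {a : ℝ → ℝ}, IsFlat a → ∀ k : ℕ,
    ContDiff ℝ n (G2 (k+1) a) := by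
  induction n with
  | zero =>
    intro a h k
    rw [show ((0:ℕ) : WithTop ℕ∞) = 0 from rfl, contDiff_zero]
    exact isFlat_continuous_G2 h k
  | succ n ih =>
    intro a h k
    rw [show ((n+1 : ℕ) : WithTop ℕ∞) = (n : WithTop ℕ∞) + 1 from by push_cast; rfl,
      contDiff_succ_iff_fderiv]
    refine ⟨fun p => (isFlat_hasFDerivAt_G2 h k p).differentiableAt, ?_, ?_⟩
    · intro hh
      exact absurd hh (by exact_mod_cast (WithTop.coe_ne_top))
    · have hde : fderiv ℝ (G2 (k+1) a) = D2 k a := by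
        funext p
        exact (isFlat_hasFDerivAt_G2 h k p).fderiv
      rw [hde]
      have c1 : ContDiff ℝ n fun p : ℝ × ℝ =>
          G2 (k+1) (deriv a) p - (k+1) * G2 (k+2) a p :=
        (ih (isFlat_deriv h) k).sub (contDiff_const.mul (ih h (k+1)))
      have c2 : ContDiff ℝ n fun p : ℝ × ℝ => -(2 * p.2) * G2 (k+1) (deriv a) p :=
        ((contDiff_const.mul contDiff_snd).neg.mul (ih (isFlat_deriv h) k))
      exact (c1.smul contDiff_const).add (c2.smul contDiff_const)

lemma isFlat_contDiff_top_G2 {a : ℝ → ℝ} (h : IsFlat a) (k : ℕ) :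
    ContDiff ℝ (⊤ : ℕ∞) (G2 (k+1) a) := by
  rw [contDiff_infty]
  intro n
  exact isFlat_contDiff_G2 h k

/-- The quadratic form `x² + y² − z²`. -/
def Qf (p : Fin 3 → ℝ) : ℝ := (p 0) ^ 2 + (p 1) ^ 2 - (p 2) ^ 2

/-- `A(x,y,z) = a(x²+y²−z²)/(x²+y²)` when `x²+y² ≠ 0`, and `0` when `x²+y² = 0`. -/
def Afun (a : ℝ → ℝ) (p : Fin 3 → ℝ) : ℝ :=
  if (p 0) ^ 2 + (p 1) ^ 2 = 0 then 0 else a (Qf p) / ((p 0) ^ 2 + (p 1) ^ 2)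

/-- `f = x·A`. -/
def ff (a : ℝ → ℝ) (p : Fin 3 → ℝ) : ℝ := p 0 * Afun a p

/-- `g = −y·A`. -/
def gf (a : ℝ → ℝ) (p : Fin 3 → ℝ) : ℝ := -p 1 * Afun a p

/-- If `a : ℝ → ℝ` is `C^∞` and vanishes on `(−∞,0]`, then the Cairns–Ghys coefficient
`A(x,y,z) = a(x²+y²−z²)/(x²+y²)` (extended by `0` where `x²+y² = 0`) is `C^∞` on all of
`ℝ³`, and consequently so are `f = x·A` and `g = −y·A`. -/
theorem cairnsGhys_coefficients_smooth
    (a : ℝ → ℝ) (ha : ContDiff ℝ (⊤ : ℕ∞) a) (ha0 : ∀ s : ℝ, s ≤ 0 → a s = 0) :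
    ContDiff ℝ (⊤ : ℕ∞) (Afun a) ∧
    ContDiff ℝ (⊤ : ℕ∞) (ff a) ∧
    ContDiff ℝ (⊤ : ℕ∞) (gf a) := by
  have hfa : IsFlat a := isFlat_def.mpr ⟨ha, ha0⟩
  have hev : ∀ i, ContDiff ℝ (⊤ : ℕ∞) (fun p : Fin 3 → ℝ => p i) :=
    fun i => contDiff_pi.mp contDiff_id i
  have hφ : ContDiff ℝ (⊤ : ℕ∞) (fun p : Fin 3 → ℝ => ((p 0) ^ 2 + (p 1) ^ 2, p 2)) :=
    (((hev 0).pow 2).add ((hev 1).pow 2)).prodMk (hev 2)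
  have hAeq : Afun a = (G2 1 a) ∘ (fun p : Fin 3 → ℝ => ((p 0) ^ 2 + (p 1) ^ 2, p 2)) := by
    funext p
    by_cases hz : (p 0) ^ 2 + (p 1) ^ 2 = 0
    · simp only [Afun, hz, if_pos, Function.comp_apply, G2]
      simp [hz]
    · simp only [Afun, if_neg hz, Function.comp_apply, G2, Qf]
      simp
  have hA : ContDiff ℝ (⊤ : ℕ∞) (Afun a) := by
    rw [hAeq]
    exact (isFlat_contDiff_top_G2 hfa 0).comp hφ
  exact ⟨hA, ((hev 0).mul hA), (((hev 1).neg).mul hA)⟩
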